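/- For all natural numbers n ≥ k ≥ 2, F_{n,k} = (k!/n) · ∑_{1 ≤ i_1 < i_2 < ⋯ < i_{k-1} ≤ n-1} 1/(i_1 i_2 ⋯ i_{k-1}). -/

import Mathlib

/-- `F n k = ∑ 1/(i₁⋯i_k)` over ordered `k`-tuples of positive integers with sum `n`. -/
def F (n k : ℕ) : ℚ :=
  ∑ f ∈ (Finset.Nat.antidiagonalTuple k n).filter (fun f => ∀ j, f j ≠ 0),
    ∏ j, (1 : ℚ) / (f j : ℚ)


def E (n j : ℕ) : ℚ :=
  ∑ s ∈ Finset.powersetCard j (Finset.Icc 1 n), (∏ i ∈ s, (i : ℚ))⁻¹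

lemma E_zero (n : ℕ) : E n 0 = 1 := by simp [E]

lemma E_eq_zero (n j : ℕ) (h : n < j) : E n j = 0 := by
  rw [E, Finset.powersetCard_eq_empty.2 (by simpa using h), Finset.sum_empty]

lemma E_rec (n j : ℕ) : E n (j + 1) = ∑ s ∈ Finset.Icc 1 n, (s : ℚ)⁻¹ * E (s - 1) j := by
  induction n with
  | zero => rw [E, Finset.powersetCard_eq_empty.2 (by simp [Nat.card_Icc])]; simp
  | succ n ih =>
    have hni : (n+1) ∉ Finset.Icc 1 n := by simp
    have hIcc : Finset.Icc 1 (n+1) = insert (n+1) (Finset.Icc 1 n) :=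
      (Finset.insert_Icc_right_eq_Icc_add_one (by omega)).symm
    have hinj : ∀ x ∈ Finset.powersetCard j (Finset.Icc 1 n),
        ∀ y ∈ Finset.powersetCard j (Finset.Icc 1 n),
        insert (n+1) x = insert (n+1) y → x = y := by
      intro x hx y hy hxy
      have hxn : (n+1) ∉ x := fun h => hni ((Finset.mem_powersetCard.1 hx).1 h)
      have hyn : (n+1) ∉ y := fun h => hni ((Finset.mem_powersetCard.1 hy).1 h)
      rw [← Finset.erase_insert hxn, hxy, Finset.erase_insert hyn]
    have hdisj : Disjoint (Finset.powersetCard (j+1) (Finset.Icc 1 n))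
        ((Finset.powersetCard j (Finset.Icc 1 n)).image (insert (n+1))) := by
      rw [Finset.disjoint_right]
      intro s hs hs'
      obtain ⟨t, ht, rfl⟩ := Finset.mem_image.1 hs
      exact hni ((Finset.mem_powersetCard.1 hs').1 (Finset.mem_insert_self _ _))
    rw [E, hIcc, Finset.powersetCard_succ_insert hni, Finset.sum_union hdisj,
      Finset.sum_image hinj]
    have step : ∀ t ∈ Finset.powersetCard j (Finset.Icc 1 n),
        (∏ i ∈ insert (n+1) t, (i : ℚ))⁻¹ = ((n:ℚ)+1)⁻¹ * (∏ i ∈ t, (i : ℚ))⁻¹ := by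
      intro t ht
      have htn : (n+1) ∉ t := fun h => hni ((Finset.mem_powersetCard.1 ht).1 h)
      rw [Finset.prod_insert htn, mul_inv]
      push_cast
      ring
    rw [Finset.sum_congr rfl step, ← Finset.mul_sum]
    rw [show (∑ s ∈ Finset.powersetCard (j+1) (Finset.Icc 1 n), (∏ i ∈ s, (i:ℚ))⁻¹) = E n (j+1) from rfl,
      ih, Finset.sum_insert hni]
    have : E (n + 1 - 1) j = ∑ s ∈ Finset.powersetCard j (Finset.Icc 1 n), (∏ i ∈ s, (i:ℚ))⁻¹ := rfl
    rw [this]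
    push_cast
    ring

lemma F_eq_zero (n k : ℕ) (h : n < k) : F n k = 0 := by
  rw [F, Finset.sum_eq_zero]
  intro f hf
  simp only [Finset.mem_filter, Finset.Nat.mem_antidiagonalTuple] at hf
  exfalso
  have : k ≤ ∑ i, f i := by
    calc k = ∑ _i : Fin k, 1 := by simp
    _ ≤ ∑ i, f i := Finset.sum_le_sum fun i _ => Nat.one_le_iff_ne_zero.2 (hf.2 i)
  omega

/-- removing coordinate j is a bijection onto shorter compositions -/
lemma sum_removeNth (n m : ℕ) (j : Fin (m + 1)) :
    ∑ f ∈ (Finset.Nat.antidiagonalTuple (m+1) n).filter (fun f => ∀ l, f l ≠ 0),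
      ∏ l, (1 : ℚ) / ((j.removeNth f) l : ℚ)
    = ∑ s ∈ Finset.range n, F s m := by
  unfold F
  rw [Finset.sum_sigma']
  apply Finset.sum_nbij' (i := fun f => ⟨n - f j, j.removeNth f⟩)
    (j := fun p => j.insertNth (n - p.1) p.2)
  · intro f hf
    simp only [Finset.mem_filter, Finset.Nat.mem_antidiagonalTuple] at hf
    have hsum : f j + ∑ l, j.removeNth f l = n := by
      rw [← hf.1, Fin.sum_univ_succAbove f j]; rfl
    simp only [Finset.mem_sigma, Finset.mem_range, Finset.mem_filter,
      Finset.Nat.mem_antidiagonalTuple]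
    have hj := hf.2 j
    refine ⟨by omega, by omega, fun l => hf.2 _⟩
  · intro p hp
    simp only [Finset.mem_sigma, Finset.mem_range, Finset.mem_filter,
      Finset.Nat.mem_antidiagonalTuple] at hp
    simp only [Finset.mem_filter, Finset.Nat.mem_antidiagonalTuple]
    constructor
    · rw [Fin.sum_univ_succAbove _ j, Fin.insertNth_apply_same]
      simp only [Fin.insertNth_apply_succAbove]
      rw [hp.2.1]
      omega
    · intro l
      rcases eq_or_ne l j with rfl | hne
      · rw [Fin.insertNth_apply_same]; omega
      · obtain ⟨l', rfl⟩ := Fin.exists_succAbove_eq hne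
        rw [Fin.insertNth_apply_succAbove]; exact hp.2.2 l'
  · intro f hf
    simp only [Finset.mem_filter, Finset.Nat.mem_antidiagonalTuple] at hf
    have hsum : f j + ∑ l, j.removeNth f l = n := by
      rw [← hf.1, Fin.sum_univ_succAbove f j]; rfl
    have : n - (n - f j) = f j := by omega
    simp [this]
  · intro p hp
    obtain ⟨s, g⟩ := p
    simp only [Finset.mem_sigma, Finset.mem_range] at hp
    have : n - (n - s) = s := by omega
    simp [this]
  · intro f hf
    rfl

lemma partial_frac (n m : ℕ) (f : Fin (m+1) → ℕ) (hf : ∀ l, f l ≠ 0)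
    (hsum : ∑ l, f l = n) :
    (n : ℚ) * ∏ l, (1:ℚ) / (f l : ℚ) = ∑ j : Fin (m+1), ∏ l, (1:ℚ) / ((j.removeNth f) l : ℚ) := by
  have hn : (n : ℚ) = ∑ j, (f j : ℚ) := by rw [← hsum]; push_cast; rfl
  rw [hn, Finset.sum_mul]
  apply Finset.sum_congr rfl
  intro j _
  rw [Fin.prod_univ_succAbove (fun l => (1:ℚ)/(f l : ℚ)) j]
  have hfj : ((f j : ℚ)) ≠ 0 := Nat.cast_ne_zero.2 (hf j)
  rw [show (∏ l, (1:ℚ) / ((j.removeNth f) l : ℚ)) = ∏ l, (1:ℚ)/(f (j.succAbove l) : ℚ) from rfl]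
  rw [← mul_assoc, mul_one_div, div_self hfj, one_mul]

lemma key_rec (n m : ℕ) :
    (n : ℚ) * F n (m+1) = (m+1) * ∑ s ∈ Finset.range n, F s m := by
  rw [F, Finset.mul_sum]
  rw [Finset.sum_congr rfl (fun f hf => by
    simp only [Finset.mem_filter, Finset.Nat.mem_antidiagonalTuple] at hf
    exact partial_frac n m f hf.2 hf.1)]
  rw [Finset.sum_comm]
  rw [Finset.sum_congr rfl (fun j (_ : j ∈ Finset.univ) => sum_removeNth n m j)]
  simp [Finset.sum_const, mul_comm]



lemma F_one (n : ℕ) (hn : 1 ≤ n) : F n 1 = 1 / n := by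
  rw [F, Finset.Nat.antidiagonalTuple_one]
  have hne : ∀ j : Fin 1, ![n] j ≠ 0 := by
    intro j
    fin_cases j
    simpa using (by omega : n ≠ 0)
  rw [Finset.filter_singleton, if_pos hne, Finset.sum_singleton]
  simp

lemma F_formula (k : ℕ) : ∀ n, 1 ≤ k → k ≤ n →
    F n k = (k.factorial : ℚ) / n * E (n - 1) (k - 1) := by
  induction k with
  | zero => intro n h; omega
  | succ k ih =>
    intro n _ hn
    rcases Nat.eq_zero_or_pos k with rfl | hk
    · rw [F_one n (by omega)]
      simp [E_zero]
    · have hn0 : (n : ℚ) ≠ 0 := Nat.cast_ne_zero.2 (by omega)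
      have hk1 : k - 1 + 1 = k := by omega
      have hsum : ∑ s ∈ Finset.range n, F s k = (k.factorial : ℚ) * E (n - 1) k := by
        have h1 : Finset.range n = insert 0 (Finset.Icc 1 (n - 1)) := by
          ext x; simp only [Finset.mem_range, Finset.mem_insert, Finset.mem_Icc]; omega
        rw [h1, Finset.sum_insert (by simp), F_eq_zero 0 k hk, zero_add]
        have hterm : ∀ s ∈ Finset.Icc 1 (n - 1),
            F s k = (k.factorial : ℚ) * ((s : ℚ)⁻¹ * E (s - 1) (k - 1)) := by
          intro s hs
          simp only [Finset.mem_Icc] at hs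
          by_cases hks : k ≤ s
          · rw [ih s hk hks, div_eq_mul_inv]; ring
          · rw [F_eq_zero s k (by omega), E_eq_zero (s - 1) (k - 1) (by omega)]
            simp
        rw [Finset.sum_congr rfl hterm, ← Finset.mul_sum, ← E_rec (n - 1) (k - 1), hk1]
      apply mul_left_cancel₀ hn0
      rw [key_rec n k, hsum, show k + 1 - 1 = k from rfl, Nat.factorial_succ]
      push_cast
      field_simp

theorem F_eq_sum_subsets (n k : ℕ) (hk : 2 ≤ k) (hkn : k ≤ n) :
    F n k = ((k.factorial : ℚ) / (n : ℚ)) *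
      ∑ s ∈ Finset.powersetCard (k - 1) (Finset.Icc 1 (n - 1)),
        (∏ i ∈ s, (i : ℚ))⁻¹ := by
  rw [F_formula k n (by omega) hkn]
  rfl
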